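/- For every n ≥ 6 even there exists a bipartite graph G on n vertices without isolated vertices with domination number 2, a unique minimum dominating set, and exactly n(n−2)/4 edges; for n ≥ 7 odd such a graph exists with exactly (n−1)²/4 edges. -/

import Mathlib

def IsDomSet {V : Type*} (G : SimpleGraph V) (D : Finset V) : Prop :=
  ∀ v, v ∉ D → ∃ u ∈ D, G.Adj u v

def IsUMDS {V : Type*} (G : SimpleGraph V) (D : Finset V) : Prop :=
  IsDomSet G D ∧ (∀ D', IsDomSet G D' → D.card ≤ D'.card) ∧
    (∀ D', IsDomSet G D' → D'.card = D.card → D' = D)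

/-- size of the "left" part -/
private def pp (n : ℕ) : ℕ := n - n / 2

/-- the adjacency relation (one direction): `x` on the left, `y` on the right.
Vertex `0` is adjacent to all right vertices except `pp n`, vertex `1` only to
`pp n`, other left vertices to everything on the right. -/
private def rel (n x y : ℕ) : Prop :=
  (2 ≤ x ∧ x < pp n ∧ pp n ≤ y) ∨ (x = 0 ∧ 1 ≤ pp n ∧ pp n < y) ∨
    (x = 1 ∧ 3 ≤ pp n ∧ y = pp n)

private instance (n x y : ℕ) : Decidable (rel n x y) := by
  unfold rel; infer_instance

private lemma rel_bounds {n x y : ℕ} (h : rel n x y) : x < pp n ∧ pp n ≤ y := by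
  unfold rel at h; omega

private def GG (n : ℕ) : SimpleGraph (Fin n) where
  Adj u v := rel n u.1 v.1 ∨ rel n v.1 u.1
  symm := ⟨fun u v h => h.symm⟩
  loopless := ⟨fun u h => by
    rcases h with h | h <;> (unfold rel at h; omega)⟩

private instance (n : ℕ) : DecidableRel (GG n).Adj := fun u v => by
  unfold GG; infer_instance

private lemma GG_adj {n : ℕ} (u v : Fin n) :
    (GG n).Adj u v ↔ rel n u.1 v.1 ∨ rel n v.1 u.1 := Iff.rfl

private lemma fin_ne {n : ℕ} {x y : Fin n} (h : x.1 ≠ y.1) : x ≠ y :=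
  fun he => h (congrArg Fin.val he)

private lemma unique_dom {n : ℕ} (h6 : 6 ≤ n) (D' : Finset (Fin n))
    (hD : IsDomSet (GG n) D') (hc : D'.card ≤ 2) :
    D' = {⟨0, by omega⟩, ⟨pp n, by unfold pp; omega⟩} := by
  have hp3 : 3 ≤ pp n := by unfold pp; omega
  have hq3 : 3 ≤ n - pp n := by unfold pp; omega
  have hpn : pp n + 3 ≤ n := by omega
  set a : Fin n := ⟨0, by omega⟩ with ha
  set b : Fin n := ⟨pp n, by omega⟩ with hb
  set u1 : Fin n := ⟨1, by omega⟩ with hu1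
  set u2 : Fin n := ⟨2, by omega⟩ with hu2
  have hav : a.1 = 0 := rfl
  have hbv : b.1 = pp n := rfl
  have hu1v : u1.1 = 1 := rfl
  have hu2v : u2.1 = 2 := rfl
  have pair_eq : ∀ x y : Fin n, x ∈ D' → y ∈ D' → x ≠ y → D' = {x, y} := by
    intro x y hx hy hxy
    refine (Finset.eq_of_subset_of_card_le
      (Finset.insert_subset hx (Finset.singleton_subset_iff.mpr hy)) ?_).symm
    rw [Finset.card_pair hxy]; exact hc
  by_cases hbD : b ∈ D'
  · by_cases haD : a ∈ D'
    · exact pair_eq a b haD hbD (fin_ne (by omega))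
    · obtain ⟨w, hwD, hadj⟩ := hD a haD
      have hw : pp n < w.1 := by
        rcases hadj with h | h <;> (unfold rel at h; omega)
      have heq : D' = {b, w} := pair_eq b w hbD hwD (fin_ne (by omega))
      obtain ⟨w', hw'v⟩ : ∃ w' : Fin n, pp n < w'.1 ∧ w'.1 ≠ w.1 := by
        by_cases h : w.1 = pp n + 1
        · exact ⟨⟨pp n + 2, by omega⟩, by simp only [Fin.val_mk]; omega,
            by simp only [Fin.val_mk]; omega⟩
        · exact ⟨⟨pp n + 1, by omega⟩, by simp only [Fin.val_mk]; omega,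
            by simp only [Fin.val_mk]; omega⟩
      have hw'D : w' ∉ D' := by
        rw [heq]; simp only [Finset.mem_insert, Finset.mem_singleton]
        push_neg
        exact ⟨fin_ne (by omega), fin_ne hw'v.2⟩
      obtain ⟨u, huD, hadj'⟩ := hD w' hw'D
      rw [heq] at huD
      simp only [Finset.mem_insert, Finset.mem_singleton] at huD
      rcases huD with rfl | rfl <;>
        rcases hadj' with h | h <;> (unfold rel at h; omega)
  · -- b ∉ D' : then u1 ∈ D'
    have h1D : u1 ∈ D' := by
      by_contra h1D
      obtain ⟨u, huD, hadj⟩ := hD u1 h1D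
      have huv : u.1 = pp n := by
        rcases hadj with h | h <;> (unfold rel at h; omega)
      exact hbD (by rwa [show u = b from Fin.ext huv] at huD)
    by_cases haD : a ∈ D'
    · have heq : D' = {a, u1} := pair_eq a u1 haD h1D (fin_ne (by omega))
      have h2D : u2 ∉ D' := by
        rw [heq]; simp only [Finset.mem_insert, Finset.mem_singleton]
        push_neg
        exact ⟨fin_ne (by omega), fin_ne (by omega)⟩
      obtain ⟨u, huD, hadj'⟩ := hD u2 h2D
      rw [heq] at huD
      simp only [Finset.mem_insert, Finset.mem_singleton] at huD
      rcases huD with rfl | rfl <;>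
        rcases hadj' with h | h <;> (unfold rel at h; omega)
    · obtain ⟨w, hwD, hadj⟩ := hD a haD
      have hw : pp n < w.1 := by
        rcases hadj with h | h <;> (unfold rel at h; omega)
      have heq : D' = {u1, w} := pair_eq u1 w h1D hwD (fin_ne (by omega))
      obtain ⟨w', hw'v⟩ : ∃ w' : Fin n, pp n < w'.1 ∧ w'.1 ≠ w.1 := by
        by_cases h : w.1 = pp n + 1
        · exact ⟨⟨pp n + 2, by omega⟩, by simp only [Fin.val_mk]; omega,
            by simp only [Fin.val_mk]; omega⟩
        · exact ⟨⟨pp n + 1, by omega⟩, by simp only [Fin.val_mk]; omega,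
            by simp only [Fin.val_mk]; omega⟩
      have hw'D : w' ∉ D' := by
        rw [heq]; simp only [Finset.mem_insert, Finset.mem_singleton]
        push_neg
        exact ⟨fin_ne (by omega), fin_ne hw'v.2⟩
      obtain ⟨u, huD, hadj'⟩ := hD w' hw'D
      rw [heq] at huD
      simp only [Finset.mem_insert, Finset.mem_singleton] at huD
      rcases huD with rfl | rfl <;>
        rcases hadj' with h | h <;> (unfold rel at h; omega)

private lemma edge_card {n : ℕ} (h6 : 6 ≤ n) :
    (GG n).edgeFinset.card = (pp n - 1) * (n - pp n) := by
  classical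
  have hp3 : 3 ≤ pp n := by unfold pp; omega
  have hq3 : 3 ≤ n - pp n := by unfold pp; omega
  have hpn : pp n + 3 ≤ n := by omega
  set S : Finset (Fin n × Fin n) :=
    Finset.univ.filter (fun z : Fin n × Fin n => rel n z.1.1 z.2.1) with hS
  have hSmem : ∀ z : Fin n × Fin n, z ∈ S ↔ rel n z.1.1 z.2.1 := by
    intro z; simp [hS]
  have himg : (GG n).edgeFinset = S.image (fun z => s(z.1, z.2)) := by
    ext e
    refine Sym2.inductionOn e (fun x y => ?_)
    simp only [SimpleGraph.mem_edgeFinset, SimpleGraph.mem_edgeSet, Finset.mem_image]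
    constructor
    · intro h
      rcases h with h | h
      · exact ⟨(x, y), (hSmem _).mpr h, rfl⟩
      · exact ⟨(y, x), (hSmem _).mpr h, Sym2.eq_swap⟩
    · rintro ⟨⟨zx, zy⟩, hz, heq⟩
      rw [hSmem] at hz
      rw [Sym2.eq_iff] at heq
      rcases heq with ⟨rfl, rfl⟩ | ⟨rfl, rfl⟩
      · exact Or.inl hz
      · exact Or.inr hz
  have hinj : Set.InjOn (fun z : Fin n × Fin n => s(z.1, z.2)) ↑S := by
    rintro ⟨x1, y1⟩ h1 ⟨x2, y2⟩ h2 heq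
    simp only [Finset.mem_coe, hSmem] at h1 h2
    have b1 := rel_bounds h1
    have b2 := rel_bounds h2
    simp only [Sym2.eq_iff] at heq
    rcases heq with ⟨rfl, rfl⟩ | ⟨rfl, rfl⟩
    · rfl
    · exfalso; omega
  rw [himg, Finset.card_image_of_injOn hinj]
  set S' : Finset (ℕ × ℕ) :=
    (Finset.Ico 2 (pp n) ×ˢ Finset.Ico (pp n) n) ∪
      ({(0 : ℕ)} ×ˢ Finset.Ico (pp n + 1) n) ∪ {((1 : ℕ), pp n)} with hS'
  have hS'mem : ∀ x y : ℕ, (x, y) ∈ S' ↔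
      ((2 ≤ x ∧ x < pp n) ∧ pp n ≤ y ∧ y < n) ∨
        (x = 0 ∧ pp n + 1 ≤ y ∧ y < n) ∨ (x = 1 ∧ y = pp n) := by
    intro x y
    simp [hS', Finset.mem_union, Finset.mem_product, Finset.mem_Ico,
      Finset.mem_singleton, Prod.ext_iff]
    omega
  have hcard : S.card = S'.card := by
    refine Finset.card_nbij (fun z => (z.1.1, z.2.1)) ?_ ?_ ?_
    · rintro ⟨x, y⟩ hz
      rw [Finset.mem_coe, hSmem] at hz
      have hy := y.isLt
      rw [Finset.mem_coe, hS'mem]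
      unfold rel at hz
      omega
    · rintro ⟨x1, y1⟩ - ⟨x2, y2⟩ - heq
      simp only [Prod.mk.injEq] at heq
      simp only [Prod.mk.injEq]
      exact ⟨Fin.ext heq.1, Fin.ext heq.2⟩
    · rintro ⟨x, y⟩ hc
      have hxy := (hS'mem x y).mp (Finset.mem_coe.mp hc)
      have hx : x < n := by omega
      have hy : y < n := by omega
      refine ⟨(⟨x, hx⟩, ⟨y, hy⟩), ?_, rfl⟩
      simp only [Finset.mem_coe, hSmem]
      unfold rel
      omega
  rw [hcard, hS']
  have d1 : Disjoint (Finset.Ico 2 (pp n) ×ˢ Finset.Ico (pp n) n)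
      ({(0 : ℕ)} ×ˢ Finset.Ico (pp n + 1) n) := by
    rw [Finset.disjoint_left]
    rintro ⟨x, y⟩ h1 h2
    simp only [Finset.mem_product, Finset.mem_Ico, Finset.mem_singleton] at h1 h2
    omega
  have d2 : Disjoint ((Finset.Ico 2 (pp n) ×ˢ Finset.Ico (pp n) n) ∪
      ({(0 : ℕ)} ×ˢ Finset.Ico (pp n + 1) n)) ({((1 : ℕ), pp n)} : Finset (ℕ × ℕ)) := by
    rw [Finset.disjoint_right]
    rintro ⟨x, y⟩ h1 h2
    simp only [Finset.mem_singleton, Prod.mk.injEq] at h1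
    simp only [Finset.mem_union, Finset.mem_product, Finset.mem_Ico,
      Finset.mem_singleton] at h2
    omega
  rw [Finset.card_union_of_disjoint d2, Finset.card_union_of_disjoint d1]
  simp only [Finset.card_product, Nat.card_Ico, Finset.card_singleton]
  obtain ⟨k, hk⟩ : ∃ k, pp n = k + 2 := ⟨pp n - 2, by omega⟩
  rw [hk]
  have e1 : k + 2 - 2 = k := by omega
  have e2 : k + 2 - 1 = k + 1 := by omega
  rw [e1, e2]
  have e3 : (k + 1) * (n - (k + 2)) = k * (n - (k + 2)) + (n - (k + 2)) := by ring
  rw [e3]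
  omega

theorem stmt12 (n : ℕ) (h6 : 6 ≤ n) :
    ∃ (G : SimpleGraph (Fin n)) (D : Finset (Fin n)),
      G.Colorable 2 ∧
      (∀ v, ∃ u, G.Adj u v) ∧
      IsUMDS G D ∧ D.card = 2 ∧
      (Even n → G.edgeSet.ncard = n * (n - 2) / 4) ∧
      (Odd n → G.edgeSet.ncard = (n - 1) ^ 2 / 4) := by
  have hp3 : 3 ≤ pp n := by unfold pp; omega
  have hq3 : 3 ≤ n - pp n := by unfold pp; omega
  have hpn : pp n + 3 ≤ n := by omega
  refine ⟨GG n, {⟨0, by omega⟩, ⟨pp n, by omega⟩}, ?_, ?_, ?_, ?_, ?_, ?_⟩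
  · -- Colorable 2
    have C : (GG n).Coloring (Fin 2) := by
      refine SimpleGraph.Coloring.mk
        (fun v => if v.1 < pp n then 0 else 1) ?_
      intro u v huv
      rcases huv with h | h <;> have := rel_bounds h <;>
        split_ifs <;> first | omega | decide
    simpa using C.colorable
  · -- no isolated vertices
    intro v
    by_cases hv : v.1 < pp n
    · by_cases hv1 : v.1 = 0
      · refine ⟨⟨pp n + 1, by omega⟩, ?_⟩
        rw [GG_adj]; unfold rel; simp only [Fin.val_mk, and_true, true_and]; omega
      · refine ⟨⟨pp n, by omega⟩, ?_⟩
        rw [GG_adj]; unfold rel; simp only [Fin.val_mk, and_true, true_and]; omega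
    · refine ⟨⟨2, by omega⟩, ?_⟩
      rw [GG_adj]; unfold rel; simp only [Fin.val_mk, and_true, true_and]; omega
  · -- IsUMDS
    have hcard2 : ({⟨0, by omega⟩, ⟨pp n, by omega⟩} : Finset (Fin n)).card = 2 := by
      refine Finset.card_pair (fin_ne ?_); simp; omega
    refine ⟨?_, ?_, ?_⟩
    · -- dominating
      intro v hv
      simp only [Finset.mem_insert, Finset.mem_singleton] at hv
      push_neg at hv
      by_cases hvp : v.1 < pp n
      · refine ⟨⟨pp n, by omega⟩, by simp, ?_⟩
        have hv0 : v.1 ≠ 0 := fun h => hv.1 (Fin.ext (by simpa using h))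
        rw [GG_adj]; unfold rel; simp only [Fin.val_mk, and_true, true_and]; omega
      · refine ⟨⟨0, by omega⟩, by simp, ?_⟩
        have hv0 : v.1 ≠ pp n := fun h => hv.2 (Fin.ext (by simpa using h))
        rw [GG_adj]; unfold rel; simp only [Fin.val_mk, and_true, true_and]; omega
    · -- minimality
      intro D' hD'
      by_contra hlt
      push_neg at hlt
      have := unique_dom h6 D' hD' (by omega)
      rw [this, hcard2] at hlt
      omega
    · -- uniqueness
      intro D' hD' hcd
      exact unique_dom h6 D' hD' (by rw [hcd, hcard2])
  · -- card = 2
    refine Finset.card_pair ?_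
    intro h
    have := congrArg Fin.val h
    simp at this
    omega
  · -- even case
    intro hEven
    obtain ⟨m, hm⟩ := hEven
    have hcnt : (GG n).edgeSet.ncard = (pp n - 1) * (n - pp n) := by
      rw [← SimpleGraph.coe_edgeFinset, Set.ncard_coe_finset, edge_card h6]
    rw [hcnt]
    have hppm : pp n = m := by unfold pp; omega
    have h4 : n * (n - 2) = 4 * ((pp n - 1) * (n - pp n)) := by
      rw [hppm]
      obtain ⟨k, hk⟩ : ∃ k, m = k + 1 := ⟨m - 1, by omega⟩
      have h1 : n = 2 * k + 2 := by omega
      rw [h1, hk]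
      have e1 : 2 * k + 2 - 2 = 2 * k := by omega
      have e2 : k + 1 - 1 = k := by omega
      have e3 : 2 * k + 2 - (k + 1) = k + 1 := by omega
      rw [e1, e2, e3]
      ring
    rw [h4, Nat.mul_div_cancel_left _ (by norm_num : (0:ℕ) < 4)]
  · -- odd case
    intro hOdd
    obtain ⟨m, hm⟩ := hOdd
    have hcnt : (GG n).edgeSet.ncard = (pp n - 1) * (n - pp n) := by
      rw [← SimpleGraph.coe_edgeFinset, Set.ncard_coe_finset, edge_card h6]
    rw [hcnt]
    have hppm : pp n = m + 1 := by unfold pp; omega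
    have h4 : (n - 1) ^ 2 = 4 * ((pp n - 1) * (n - pp n)) := by
      rw [hppm]
      have e1 : n - 1 = 2 * m := by omega
      have e2 : m + 1 - 1 = m := by omega
      have e3 : n - (m + 1) = m := by omega
      rw [e1, e2, e3]
      ring
    rw [h4, Nat.mul_div_cancel_left _ (by norm_num : (0:ℕ) < 4)]
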